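/- arXiv:1903.04901 — 2 statements merged into one kernel-verified Lean document; each statement's English description precedes it below -/
import Mathlib

section
/- If X is a p-integrable random C-closed convex set, then the family L^p(X) of p-integrable selections of X is a nonempty convex subset of L^p(ℝ^d) that is closed in the weak topology σ(L^p, L^q) and satisfies L^p(X) + L^p(C) ⊆ L^p(X). -/
open MeasureTheory Set
open scoped ENNReal Pointwise InnerProductSpace

namespace LpSelAux

/-- Binary trees of rational convex combinations. -/
inductive RComb : Type
  | leaf : ℕ → RComb
  | node : ℚ → RComb → RComb → RComb

namespace RComb

def enc : RComb → ℕ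
  | leaf n => 2 * n
  | node q l r => 2 * Nat.pair (Encodable.encode q) (Nat.pair l.enc r.enc) + 1

theorem enc_injective : Function.Injective enc := by
  intro a
  induction a with
  | leaf n =>
    intro b h
    cases b with
    | leaf m =>
      have hnm : n = m := by simp only [enc] at h; omega
      rw [hnm]
    | node q' l' r' => simp only [enc] at h; omega
  | node q l r ihl ihr =>
    intro b h
    cases b with
    | leaf m => simp only [enc] at h; omega
    | node q' l' r' =>
      simp only [enc] at h
      have h2 : Nat.pair (Encodable.encode q) (Nat.pair l.enc r.enc)
          = Nat.pair (Encodable.encode q') (Nat.pair l'.enc r'.enc) := by omega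
      rw [Nat.pair_eq_pair] at h2
      obtain ⟨hq, h3⟩ := h2
      rw [Nat.pair_eq_pair] at h3
      obtain ⟨hl, hr⟩ := h3
      have := Encodable.encode_injective (α := ℚ) hq
      rw [this, ihl hl, ihr hr]

instance : Countable RComb := ⟨⟨enc, enc_injective⟩⟩
instance : Nonempty RComb := ⟨leaf 0⟩

variable {Ω E : Type*} [NormedAddCommGroup E] [Module ℝ E]

/-- clamp a rational to [0,1] -/
def qc (q : ℚ) : ℚ := max 0 (min q 1)

theorem qc_nonneg (q : ℚ) : (0:ℝ) ≤ (qc q : ℝ) := by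
  have : (0:ℚ) ≤ qc q := le_max_left _ _
  exact_mod_cast this

theorem qc_le_one (q : ℚ) : ((qc q : ℚ) : ℝ) ≤ 1 := by
  have : qc q ≤ 1 := max_le (by norm_num) (min_le_right _ _)
  exact_mod_cast this

theorem qc_of_mem (q : ℚ) (h0 : 0 ≤ q) (h1 : q ≤ 1) : qc q = q := by
  simp [qc, min_eq_left h1, max_eq_right h0]

def eval (f : ℕ → Ω → E) : RComb → Ω → E
  | leaf n => f n
  | node q l r => fun ω => ((qc q : ℚ) : ℝ) • eval f l ω + (1 - ((qc q : ℚ) : ℝ)) • eval f r ω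

theorem eval_mem {f : ℕ → Ω → E} {S : Set E} (hS : Convex ℝ S) {ω : Ω}
    (hf : ∀ n, f n ω ∈ S) : ∀ t, eval f t ω ∈ S := by
  intro t
  induction t with
  | leaf n => exact hf n
  | node q l r ihl ihr =>
    exact hS ihl ihr (qc_nonneg q) (by linarith [qc_le_one q]) (by ring)

theorem eval_measurable [MeasurableSpace Ω] [MeasurableSpace E] [BorelSpace E]
    [SecondCountableTopology E] [ContinuousAdd E] [ContinuousSMul ℝ E]
    {f : ℕ → Ω → E} (hf : ∀ n, Measurable (f n)) : ∀ t, Measurable (eval f t) := by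
  intro t
  induction t with
  | leaf n => exact hf n
  | node q l r ihl ihr => exact (ihl.const_smul _).add (ihr.const_smul _)

end RComb

end LpSelAux

namespace LpSelAux

variable {Ω : Type*} [MeasurableSpace Ω] {E : Type*} [NormedAddCommGroup E]
  [InnerProductSpace ℝ E] [MeasurableSpace E] [BorelSpace E]
  [SecondCountableTopology E] [CompleteSpace E]

set_option maxHeartbeats 1000000 in
theorem exists_measurable_proj (s : ℕ → Ω → E) (hs : ∀ k, Measurable (s k))
    (hcomb : ∀ q : ℚ, 0 ≤ q → q ≤ 1 → ∀ k l, ∃ m, ∀ ω,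
      s m ω = (q : ℝ) • s k ω + (1 - (q : ℝ)) • s l ω)
    (f : Ω → E) (hf : Measurable f) :
    ∃ η : Ω → E, Measurable η ∧ ∀ ω,
      (∃ φ : ℕ → ℕ, Filter.Tendsto (fun m => s (φ m) ω) Filter.atTop (nhds (η ω))) ∧
      (∀ k, ‖f ω - η ω‖ ≤ ‖f ω - s k ω‖) ∧
      (∀ k, ⟪f ω - η ω, s k ω - η ω⟫_ℝ ≤ 0) := by
  classical
  set δ : Ω → ℝ := fun ω => ⨅ k, ‖f ω - s k ω‖ with hδdef
  have hbdd : ∀ ω, BddBelow (Set.range fun k => ‖f ω - s k ω‖) := by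
    intro ω
    exact ⟨0, by rintro x ⟨k, rfl⟩; positivity⟩
  have hδle : ∀ ω k, δ ω ≤ ‖f ω - s k ω‖ := fun ω k => ciInf_le (hbdd ω) k
  have hδ0 : ∀ ω, 0 ≤ δ ω := fun ω => le_ciInf fun k => norm_nonneg _
  -- approximate minimizers
  have hex : ∀ (m : ℕ) (ω : Ω), ∃ k, ∀ j,
      ‖f ω - s k ω‖ < ‖f ω - s j ω‖ + 1 / ((m : ℝ) + 1) := by
    intro m ω
    have hlt : δ ω < δ ω + 1 / ((m : ℝ) + 1) := by
      have : (0:ℝ) < 1 / ((m : ℝ) + 1) := by positivity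
      linarith
    obtain ⟨k, hk⟩ := exists_lt_of_ciInf_lt hlt
    exact ⟨k, fun j => lt_of_lt_of_le hk (by have := hδle ω j; linarith)⟩
  set θ : ℕ → Ω → E := fun m ω => s (Nat.find (hex m ω)) ω with hθdef
  have hθmeas : ∀ m, Measurable (θ m) := by
    intro m
    apply Measurable.find hs
    · intro k
      rw [Set.setOf_forall]
      apply MeasurableSet.iInter
      intro j
      exact measurableSet_lt ((hf.sub (hs k)).norm)
        (((hf.sub (hs j)).norm).add_const _)
  have hub : ∀ m ω, ‖f ω - θ m ω‖ ≤ δ ω + 1 / ((m : ℝ) + 1) := by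
    intro m ω
    have h := Nat.find_spec (hex m ω)
    have : ‖f ω - θ m ω‖ - 1 / ((m : ℝ) + 1) ≤ δ ω :=
      le_ciInf fun j => by have := h j; simp only [hθdef]; linarith
    linarith
  have hlb : ∀ m ω, δ ω ≤ ‖f ω - θ m ω‖ := fun m ω => hδle ω _
  -- squared distance bound between two approximate minimizers
  have hsq : ∀ ω a b, ‖θ a ω - θ b ω‖ ^ 2
      ≤ 2 * (δ ω + 1 / ((a : ℝ) + 1)) ^ 2 + 2 * (δ ω + 1 / ((b : ℝ) + 1)) ^ 2
        - 4 * δ ω ^ 2 := by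
    intro ω a b
    obtain ⟨j, hj⟩ := hcomb (1/2) (by norm_num) (by norm_num)
      (Nat.find (hex a ω)) (Nat.find (hex b ω))
    have hmid : s j ω = (1/2 : ℝ) • θ a ω + (1/2 : ℝ) • θ b ω := by
      simp only [hθdef]
      rw [hj ω]
      norm_num
    set u := f ω - θ a ω with hu
    set v := f ω - θ b ω with hv
    have hpar : ‖u + v‖ * ‖u + v‖ + ‖u - v‖ * ‖u - v‖ = 2 * (‖u‖ * ‖u‖ + ‖v‖ * ‖v‖) := by
      simpa only [pow_two] using parallelogram_law_with_norm ℝ u v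
    have huv : u + v = (2:ℝ) • (f ω - s j ω) := by
      rw [hmid, hu, hv]; module
    have hnuv : ‖u + v‖ = 2 * ‖f ω - s j ω‖ := by
      rw [huv, norm_smul]; simp
    have hsub : u - v = θ b ω - θ a ω := by rw [hu, hv]; abel
    have h1 : ‖u‖ ≤ δ ω + 1 / ((a : ℝ) + 1) := hub a ω
    have h2 : ‖v‖ ≤ δ ω + 1 / ((b : ℝ) + 1) := hub b ω
    have h3 : δ ω ≤ ‖f ω - s j ω‖ := hδle ω j
    have h4 : ‖θ a ω - θ b ω‖ = ‖u - v‖ := by rw [hsub, norm_sub_rev]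
    have h5 : (0:ℝ) ≤ ‖u‖ := norm_nonneg _
    have h6 : (0:ℝ) ≤ ‖v‖ := norm_nonneg _
    have h7 : (0:ℝ) ≤ δ ω := hδ0 ω
    have h8 : ‖u‖ ^ 2 ≤ (δ ω + 1 / ((a : ℝ) + 1)) ^ 2 := pow_le_pow_left₀ h5 h1 2
    have h9 : ‖v‖ ^ 2 ≤ (δ ω + 1 / ((b : ℝ) + 1)) ^ 2 := pow_le_pow_left₀ h6 h2 2
    have e1 : 4 * δ ω ^ 2 ≤ ‖u + v‖ ^ 2 := by
      have h10 : δ ω ^ 2 ≤ ‖f ω - s j ω‖ ^ 2 := pow_le_pow_left₀ h7 h3 2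
      rw [hnuv, mul_pow]
      norm_num
      linarith
    have e0 : ‖u + v‖ ^ 2 + ‖u - v‖ ^ 2 = 2 * ‖u‖ ^ 2 + 2 * ‖v‖ ^ 2 := by
      rw [pow_two, pow_two, pow_two, pow_two]
      linarith [hpar]
    rw [h4]
    linarith [e0, e1, h8, h9]
  -- Cauchy
  have hcau : ∀ ω, CauchySeq fun m => θ m ω := by
    intro ω
    rw [Metric.cauchySeq_iff]
    intro ε hε
    have h7 : (0:ℝ) ≤ δ ω := hδ0 ω
    have h85 : (0:ℝ) < 8 * δ ω + 5 := by linarith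
    have hc : (0:ℝ) < ε ^ 2 / (8 * δ ω + 5) := by positivity
    obtain ⟨N, hN⟩ := exists_nat_one_div_lt hc
    refine ⟨N, fun a ha b hb => ?_⟩
    have hea : 1 / ((a : ℝ) + 1) ≤ 1 / ((N : ℝ) + 1) := by
      apply one_div_le_one_div_of_le (by positivity)
      have : (N : ℝ) ≤ (a : ℝ) := by exact_mod_cast ha
      linarith
    have heb : 1 / ((b : ℝ) + 1) ≤ 1 / ((N : ℝ) + 1) := by
      apply one_div_le_one_div_of_le (by positivity)
      have : (N : ℝ) ≤ (b : ℝ) := by exact_mod_cast hb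
      linarith
    have heN : 1 / ((N : ℝ) + 1) ≤ 1 := by
      rw [div_le_one (by positivity)]
      linarith [Nat.cast_nonneg (α := ℝ) N]
    have h0N : (0:ℝ) < 1 / ((N : ℝ) + 1) := by positivity
    have h0a : (0:ℝ) < 1 / ((a : ℝ) + 1) := by positivity
    have h0b : (0:ℝ) < 1 / ((b : ℝ) + 1) := by positivity
    have hsq' := hsq ω a b
    have hA : (δ ω + 1 / ((a : ℝ) + 1)) ^ 2 ≤ (δ ω + 1 / ((N : ℝ) + 1)) ^ 2 :=
      pow_le_pow_left₀ (by positivity) (by linarith) 2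
    have hB : (δ ω + 1 / ((b : ℝ) + 1)) ^ 2 ≤ (δ ω + 1 / ((N : ℝ) + 1)) ^ 2 :=
      pow_le_pow_left₀ (by positivity) (by linarith) 2
    have hprod : (8 * δ ω + 5) * (1 / ((N : ℝ) + 1)) < ε ^ 2 := by
      have h := mul_lt_mul_of_pos_left hN h85
      have heq : (8 * δ ω + 5) * (ε ^ 2 / (8 * δ ω + 5)) = ε ^ 2 := by
        field_simp
      linarith [h, heq.le, heq.ge]
    have hexp2 : 2 * (δ ω + 1 / ((N : ℝ) + 1)) ^ 2 + 2 * (δ ω + 1 / ((N : ℝ) + 1)) ^ 2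
        - 4 * δ ω ^ 2 = 8 * δ ω * (1 / ((N : ℝ) + 1)) + 4 * (1 / ((N : ℝ) + 1)) ^ 2 := by
      ring
    have h4e : (1 / ((N : ℝ) + 1)) ^ 2 ≤ 1 / ((N : ℝ) + 1) := by
      rw [pow_two]
      exact mul_le_of_le_one_left h0N.le heN
    have hprod' : 8 * δ ω * (1 / ((N : ℝ) + 1)) + 5 * (1 / ((N : ℝ) + 1)) < ε ^ 2 := by
      nlinarith [hprod]
    have hlt2 : ‖θ a ω - θ b ω‖ ^ 2 < ε ^ 2 := by
      linarith [hsq', hA, hB, hexp2, h4e, hprod']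
    have := lt_of_pow_lt_pow_left₀ 2 (le_of_lt hε) hlt2
    rwa [dist_eq_norm]
  have hexlim : ∀ ω, ∃ x, Filter.Tendsto (fun m => θ m ω) Filter.atTop (nhds x) :=
    fun ω => cauchySeq_tendsto_of_complete (hcau ω)
  choose η hη using hexlim
  have hηmeas : Measurable η :=
    measurable_of_tendsto_metrizable hθmeas (tendsto_pi_nhds.mpr hη)
  -- distance realized
  have hδeq : ∀ ω, ‖f ω - η ω‖ = δ ω := by
    intro ω
    have h1 : Filter.Tendsto (fun m => ‖f ω - θ m ω‖) Filter.atTop (nhds ‖f ω - η ω‖) :=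
      (Filter.Tendsto.sub tendsto_const_nhds (hη ω)).norm
    have h2 : Filter.Tendsto (fun m : ℕ => δ ω + 1 / ((m : ℝ) + 1)) Filter.atTop
        (nhds (δ ω)) := by
      have := (tendsto_const_nhds (x := δ ω)).add tendsto_one_div_add_atTop_nhds_zero_nat
      rwa [add_zero] at this
    have h3 : Filter.Tendsto (fun m => ‖f ω - θ m ω‖) Filter.atTop (nhds (δ ω)) :=
      tendsto_of_tendsto_of_tendsto_of_le_of_le tendsto_const_nhds h2
        (fun m => hlb m ω) (fun m => hub m ω)
    exact tendsto_nhds_unique h1 h3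
  refine ⟨η, hηmeas, fun ω => ⟨⟨fun m => Nat.find (hex m ω), hη ω⟩, ?_, ?_⟩⟩
  · intro k
    rw [hδeq ω]; exact hδle ω k
  · -- variational inequality
    intro k
    have key : ∀ i : ℕ, ⟪f ω - η ω, s k ω - η ω⟫_ℝ
        ≤ (1/2 : ℝ) ^ i / 2 * ‖s k ω - η ω‖ ^ 2 := by
      intro i
      set c : ℝ := (1/2 : ℝ) ^ i with hc
      have hc0 : 0 < c := by positivity
      have hc1 : c ≤ 1 := pow_le_one₀ (by norm_num) (by norm_num)
      have hq0 : (0:ℚ) ≤ (1/2 : ℚ) ^ i := by positivity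
      have hq1 : ((1/2 : ℚ) ^ i) ≤ 1 := pow_le_one₀ (by norm_num) (by norm_num)
      have hstep : ∀ m : ℕ, δ ω ≤ ‖f ω - (c • s k ω + (1 - c) • θ m ω)‖ := by
        intro m
        obtain ⟨j, hj⟩ := hcomb ((1/2 : ℚ) ^ i) hq0 hq1 k (Nat.find (hex m ω))
        have hrw : s j ω = c • s k ω + (1 - c) • θ m ω := by
          simp only [hθdef]
          rw [hj ω, hc]
          push_cast
          norm_num
        rw [← hrw]
        exact hδle ω j
      have hcont : Filter.Tendsto (fun m => ‖f ω - (c • s k ω + (1 - c) • θ m ω)‖)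
          Filter.atTop (nhds ‖f ω - (c • s k ω + (1 - c) • η ω)‖) :=
        (Filter.Tendsto.sub tendsto_const_nhds
          (Filter.Tendsto.add tendsto_const_nhds ((hη ω).const_smul _))).norm
      have hineq : δ ω ≤ ‖f ω - (c • s k ω + (1 - c) • η ω)‖ :=
        ge_of_tendsto hcont (Filter.Eventually.of_forall hstep)
      set u := f ω - η ω with hu
      set w := s k ω - η ω with hw
      have hrw2 : f ω - (c • s k ω + (1 - c) • η ω) = u - c • w := by
        rw [hu, hw]; module
      have hbig : ‖u‖ ≤ ‖u - c • w‖ := by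
        rw [← hrw2, hu, hδeq ω]
        exact hineq
      have hexp : ‖u - c • w‖ ^ 2 = ‖u‖ ^ 2 - 2 * (c * ⟪u, w⟫_ℝ) + c ^ 2 * ‖w‖ ^ 2 := by
        rw [norm_sub_sq_real, real_inner_smul_right, norm_smul]
        rw [Real.norm_eq_abs, abs_of_nonneg hc0.le]
        ring
      have h2 : ‖u‖ ^ 2 ≤ ‖u - c • w‖ ^ 2 :=
        pow_le_pow_left₀ (norm_nonneg _) hbig 2
      rw [hexp] at h2
      have h3 : 2 * (c * ⟪u, w⟫_ℝ) ≤ c ^ 2 * ‖w‖ ^ 2 := by linarith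
      have h4 : ⟪u, w⟫_ℝ ≤ c / 2 * ‖w‖ ^ 2 := by nlinarith [hc0]
      rw [hc] at h4
      exact h4
    have hlim0 : Filter.Tendsto (fun i : ℕ => (1/2 : ℝ) ^ i / 2 * ‖s k ω - η ω‖ ^ 2)
        Filter.atTop (nhds 0) := by
      have h := tendsto_pow_atTop_nhds_zero_of_lt_one (by norm_num : (0:ℝ) ≤ 1/2)
        (by norm_num : (1/2 : ℝ) < 1)
      have h2 := (h.div_const 2).mul_const (‖s k ω - η ω‖ ^ 2)
      simpa using h2
    exact ge_of_tendsto hlim0 (Filter.Eventually.of_forall key)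

end LpSelAux

/-- The family of `p`-integrable selections of a random set `X`. -/
def LpSelections {Ω : Type*} [MeasurableSpace Ω] (μ : Measure Ω) (p : ℝ≥0∞)
    {d : ℕ} (X : Ω → Set (EuclideanSpace ℝ (Fin d))) :
    Set (Ω → EuclideanSpace ℝ (Fin d)) :=
  {ξ | MemLp ξ p μ ∧ ∀ᵐ ω ∂μ, ξ ω ∈ X ω}

set_option maxHeartbeats 1000000 in
/-- for a `p`-integrable random `C`-closed convex set `X`, the family
`L^p(X)` of its `p`-integrable selections is nonempty, convex, closed under addition of
`p`-integrable selections of `C`, and closed with respect to weak `σ(L^p,L^q)` convergence. -/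
theorem LpSelections_nonempty_convex_closed
    {Ω : Type*} [MeasurableSpace Ω] (μ : Measure Ω) [IsProbabilityMeasure μ]
    {d : ℕ} (p q : ℝ≥0∞) (hpq : 1/p + 1/q = 1)
    (C : Set (EuclideanSpace ℝ (Fin d))) (hC : IsClosed C) (hCconv : Convex ℝ C)
    (hCcone : ∀ c : ℝ, 0 < c → c • C = C)
    (X : Ω → Set (EuclideanSpace ℝ (Fin d)))
    (hXcl : ∀ᵐ ω ∂μ, IsClosed (X ω) ∧ Convex ℝ (X ω) ∧ X ω + C = X ω)
    (hXint : (LpSelections μ p X).Nonempty) :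
    (LpSelections μ p X).Nonempty ∧
    (∀ ξ η : Ω → EuclideanSpace ℝ (Fin d), ξ ∈ LpSelections μ p X →
      η ∈ LpSelections μ p X → ∀ t : ℝ, 0 ≤ t → t ≤ 1 →
      (fun ω => t • ξ ω + (1 - t) • η ω) ∈ LpSelections μ p X) ∧
    (∀ ξ γ : Ω → EuclideanSpace ℝ (Fin d), ξ ∈ LpSelections μ p X →
      γ ∈ LpSelections μ p (fun _ => C) → (fun ω => ξ ω + γ ω) ∈ LpSelections μ p X) ∧
    (∀ (ξn : ℕ → (Ω → EuclideanSpace ℝ (Fin d))) (ξ : Ω → EuclideanSpace ℝ (Fin d)),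
      (∀ n, ξn n ∈ LpSelections μ p X) → MemLp ξ p μ →
      (∀ ζ : Ω → EuclideanSpace ℝ (Fin d), MemLp ζ q μ →
        Filter.Tendsto (fun n => ∫ ω, ⟪ξn n ω, ζ ω⟫_ℝ ∂μ) Filter.atTop
          (nhds (∫ ω, ⟪ξ ω, ζ ω⟫_ℝ ∂μ))) →
      ξ ∈ LpSelections μ p X) := by
  have hp1 : 1 ≤ p := by
    have h1p : 1/p ≤ 1 := by
      calc 1/p ≤ 1/p + 1/q := le_self_add
        _ = 1 := hpq
    rw [one_div] at h1p
    exact ENNReal.inv_le_one.mp h1p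
  refine ⟨hXint, ?_, ?_, ?_⟩
  · -- convexity
    intro ξ η hξ hη t ht0 ht1
    refine ⟨(hξ.1.const_smul t).add (hη.1.const_smul (1 - t)), ?_⟩
    filter_upwards [hξ.2, hη.2, hXcl] with ω h1 h2 h3
    exact h3.2.1 h1 h2 ht0 (by linarith) (by ring)
  · -- addition of selections of C
    intro ξ γ hξ hγ
    refine ⟨hξ.1.add hγ.1, ?_⟩
    filter_upwards [hξ.2, hγ.2, hXcl] with ω h1 h2 h3
    rw [← h3.2.2]
    exact Set.add_mem_add h1 h2
  · -- weak closedness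
    intro ξn ξ hmem hξp hconv
    classical
    -- measurable representatives
    set f0 : ℕ → Ω → EuclideanSpace ℝ (Fin d) := fun n => (hmem n).1.1.mk (ξn n) with hf0
    have hf0meas : ∀ n, Measurable (f0 n) := fun n =>
      (hmem n).1.1.stronglyMeasurable_mk.measurable
    set fξ : Ω → EuclideanSpace ℝ (Fin d) := hξp.1.mk ξ with hfξdef
    have hfξmeas : Measurable fξ := hξp.1.stronglyMeasurable_mk.measurable
    -- the countable family of rational convex combinations
    obtain ⟨u, hu⟩ := exists_surjective_nat LpSelAux.RComb
    set s : ℕ → Ω → EuclideanSpace ℝ (Fin d) := fun k => LpSelAux.RComb.eval f0 (u k) with hs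
    have hsmeas : ∀ k, Measurable (s k) := fun k =>
      LpSelAux.RComb.eval_measurable hf0meas (u k)
    have hcomb : ∀ qq : ℚ, 0 ≤ qq → qq ≤ 1 → ∀ k l, ∃ m, ∀ ω,
        s m ω = (qq : ℝ) • s k ω + (1 - (qq : ℝ)) • s l ω := by
      intro qq h0 h1 k l
      obtain ⟨m, hm⟩ := hu (LpSelAux.RComb.node qq (u k) (u l))
      refine ⟨m, fun ω => ?_⟩
      simp only [hs]
      rw [hm]
      simp [LpSelAux.RComb.eval, LpSelAux.RComb.qc_of_mem qq h0 h1]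
    have hleaf : ∀ n, ∃ k, s k = f0 n := by
      intro n
      obtain ⟨k, hk⟩ := hu (LpSelAux.RComb.leaf n)
      refine ⟨k, ?_⟩
      simp only [hs]
      rw [hk]
      rfl
    obtain ⟨η, hηmeas, hηprop⟩ :=
      LpSelAux.exists_measurable_proj s hsmeas hcomb fξ hfξmeas
    set g : Ω → EuclideanSpace ℝ (Fin d) := fun ω => fξ ω - η ω with hg
    have hgmeas : Measurable g := hfξmeas.sub hηmeas
    set ζ : Ω → EuclideanSpace ℝ (Fin d) := fun ω => ((1 + ‖g ω‖)⁻¹ : ℝ) • g ω with hζ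
    have hζmeas : Measurable ζ := ((measurable_const.add hgmeas.norm).inv).smul hgmeas
    have hζbd : ∀ ω, ‖ζ ω‖ ≤ 1 := by
      intro ω
      have h1 : (0:ℝ) < 1 + ‖g ω‖ := by positivity
      simp only [hζ]
      rw [norm_smul, Real.norm_eq_abs, abs_of_nonneg (by positivity)]
      calc (1 + ‖g ω‖)⁻¹ * ‖g ω‖ ≤ (1 + ‖g ω‖)⁻¹ * (1 + ‖g ω‖) := by
            apply mul_le_mul_of_nonneg_left (by linarith) (by positivity)
        _ = 1 := inv_mul_cancel₀ h1.ne'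
    have hζq : MemLp ζ q μ :=
      (memLp_top_of_bound hζmeas.aestronglyMeasurable 1
        (Filter.Eventually.of_forall hζbd)).mono_exponent le_top
    have hT := hconv ζ hζq
    -- a.e. facts
    have haeeq : ∀ᵐ ω ∂μ, ∀ n, f0 n ω = ξn n ω := by
      rw [MeasureTheory.ae_all_iff]
      exact fun n => ((hmem n).1.1.ae_eq_mk).symm
    have haemem : ∀ᵐ ω ∂μ, ∀ n, ξn n ω ∈ X ω := by
      rw [MeasureTheory.ae_all_iff]
      exact fun n => (hmem n).2
    have haefξ : ∀ᵐ ω ∂μ, ξ ω = fξ ω := hξp.1.ae_eq_mk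
    have hsX : ∀ᵐ ω ∂μ, ∀ k, s k ω ∈ X ω := by
      filter_upwards [haeeq, haemem, hXcl] with ω h1 h2 h3 k
      apply LpSelAux.RComb.eval_mem h3.2.1
      intro n
      rw [h1 n]
      exact h2 n
    have hηX : ∀ᵐ ω ∂μ, η ω ∈ X ω := by
      filter_upwards [hsX, hXcl] with ω h1 h2
      obtain ⟨φ, hφ⟩ := (hηprop ω).1
      exact h2.1.mem_of_tendsto hφ (Filter.Eventually.of_forall fun m => h1 (φ m))
    -- integrability
    have hξnint : ∀ n, Integrable (ξn n) μ := fun n => ((hmem n).1).integrable hp1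
    have hfξint : Integrable fξ μ := (hξp.integrable hp1).congr hξp.1.ae_eq_mk
    have hf00int : Integrable (f0 0) μ := (hξnint 0).congr ((hmem 0).1.1.ae_eq_mk)
    obtain ⟨k0, hk0⟩ := hleaf 0
    have hηbd : ∀ ω, ‖η ω‖ ≤ 2 * ‖fξ ω‖ + ‖f0 0 ω‖ := by
      intro ω
      have h1 := (hηprop ω).2.1 k0
      rw [hk0] at h1
      have h2 := norm_sub_le (fξ ω) (f0 0 ω)
      calc ‖η ω‖ = ‖fξ ω - (fξ ω - η ω)‖ := by congr 1; abel
        _ ≤ ‖fξ ω‖ + ‖fξ ω - η ω‖ := norm_sub_le _ _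
        _ ≤ 2 * ‖fξ ω‖ + ‖f0 0 ω‖ := by linarith
    have hηint : Integrable η μ := by
      refine Integrable.mono ((hfξint.norm.const_mul 2).add hf00int.norm)
        hηmeas.aestronglyMeasurable ?_
      refine Filter.Eventually.of_forall fun ω => ?_
      have h1 := hηbd ω
      have h2 : (0:ℝ) ≤ 2 * ‖fξ ω‖ + ‖f0 0 ω‖ := by positivity
      simpa [Real.norm_eq_abs, abs_of_nonneg (norm_nonneg _),
        abs_of_nonneg h2] using h1
    have hIη : Integrable (fun ω => ⟪η ω, ζ ω⟫_ℝ) μ := by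
      refine Integrable.mono hηint.norm
        (hηmeas.inner hζmeas).aestronglyMeasurable
        (Filter.Eventually.of_forall fun ω => ?_)
      rw [Real.norm_eq_abs, norm_norm]
      calc |⟪η ω, ζ ω⟫_ℝ| ≤ ‖η ω‖ * ‖ζ ω‖ := abs_real_inner_le_norm _ _
        _ ≤ ‖η ω‖ * 1 := mul_le_mul_of_nonneg_left (hζbd ω) (norm_nonneg _)
        _ = ‖η ω‖ := mul_one _
    have hIn : ∀ n, Integrable (fun ω => ⟪ξn n ω, ζ ω⟫_ℝ) μ := by
      intro n
      refine Integrable.mono (hξnint n).norm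
        ((hmem n).1.1.inner hζmeas.aestronglyMeasurable)
        (Filter.Eventually.of_forall fun ω => ?_)
      rw [Real.norm_eq_abs, norm_norm]
      calc |⟪ξn n ω, ζ ω⟫_ℝ| ≤ ‖ξn n ω‖ * ‖ζ ω‖ := abs_real_inner_le_norm _ _
        _ ≤ ‖ξn n ω‖ * 1 := mul_le_mul_of_nonneg_left (hζbd ω) (norm_nonneg _)
        _ = ‖ξn n ω‖ := mul_one _
    have hgint : Integrable g μ := hfξint.sub hηint
    have hIg : Integrable (fun ω => (1 + ‖g ω‖)⁻¹ * ‖g ω‖ ^ 2) μ := by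
      refine Integrable.mono hgint.norm
        (Measurable.aestronglyMeasurable ?_)
        (Filter.Eventually.of_forall fun ω => ?_)
      · exact ((measurable_const.add hgmeas.norm).inv).mul (hgmeas.norm.pow_const 2)
      · have h1 : (0:ℝ) < 1 + ‖g ω‖ := by positivity
        have hx := norm_nonneg (g ω)
        rw [Real.norm_eq_abs, norm_norm, abs_of_nonneg (by positivity)]
        rw [inv_mul_eq_div, div_le_iff₀ h1]
        nlinarith
    -- key inequality
    have hle : ∀ n, (∫ ω, ⟪ξn n ω, ζ ω⟫_ℝ ∂μ) ≤ ∫ ω, ⟪η ω, ζ ω⟫_ℝ ∂μ := by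
      intro n
      obtain ⟨kn, hkn⟩ := hleaf n
      apply integral_mono_ae (hIn n) hIη
      filter_upwards [haeeq] with ω h1
      have hv := (hηprop ω).2.2 kn
      have hc0 : (0:ℝ) ≤ (1 + ‖g ω‖)⁻¹ := by positivity
      have hx : ξn n ω = s kn ω := by rw [hkn]; exact (h1 n).symm
      have hdiff : ⟪ξn n ω, ζ ω⟫_ℝ - ⟪η ω, ζ ω⟫_ℝ
          = (1 + ‖g ω‖)⁻¹ * ⟪fξ ω - η ω, s kn ω - η ω⟫_ℝ := by
        rw [hx, ← inner_sub_left]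
        simp only [hζ]
        rw [real_inner_smul_right, real_inner_comm]
      have hmul : (1 + ‖g ω‖)⁻¹ * ⟪fξ ω - η ω, s kn ω - η ω⟫_ℝ ≤ 0 :=
        mul_nonpos_iff.mpr (Or.inl ⟨hc0, hv⟩)
      linarith [hdiff, hmul]
    have hpt : ∀ ω, ⟪fξ ω, ζ ω⟫_ℝ = ⟪η ω, ζ ω⟫_ℝ + (1 + ‖g ω‖)⁻¹ * ‖g ω‖ ^ 2 := by
      intro ω
      have h1 : ⟪fξ ω, ζ ω⟫_ℝ - ⟪η ω, ζ ω⟫_ℝ = ⟪g ω, ζ ω⟫_ℝ := by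
        rw [← inner_sub_left]
      have h2 : ⟪g ω, ζ ω⟫_ℝ = (1 + ‖g ω‖)⁻¹ * ‖g ω‖ ^ 2 := by
        simp only [hζ]
        rw [real_inner_smul_right, real_inner_self_eq_norm_sq]
      linarith [h1, h2]
    have hsplit : (∫ ω, ⟪ξ ω, ζ ω⟫_ℝ ∂μ)
        = (∫ ω, ⟪η ω, ζ ω⟫_ℝ ∂μ) + ∫ ω, (1 + ‖g ω‖)⁻¹ * ‖g ω‖ ^ 2 ∂μ := by
      have h1 : (∫ ω, ⟪ξ ω, ζ ω⟫_ℝ ∂μ)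
          = ∫ ω, (⟪η ω, ζ ω⟫_ℝ + (1 + ‖g ω‖)⁻¹ * ‖g ω‖ ^ 2) ∂μ := by
        apply integral_congr_ae
        filter_upwards [haefξ] with ω h
        rw [h, hpt ω]
      rw [h1, integral_add hIη hIg]
    have hint0 : (∫ ω, (1 + ‖g ω‖)⁻¹ * ‖g ω‖ ^ 2 ∂μ) = 0 := by
      have hle2 := le_of_tendsto hT (Filter.Eventually.of_forall hle)
      rw [hsplit] at hle2
      have hge0 : 0 ≤ ∫ ω, (1 + ‖g ω‖)⁻¹ * ‖g ω‖ ^ 2 ∂μ :=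
        integral_nonneg fun ω => by positivity
      linarith
    have hg0 : ∀ᵐ ω ∂μ, g ω = 0 := by
      have h := (integral_eq_zero_iff_of_nonneg (fun ω => by positivity) hIg).mp hint0
      filter_upwards [h] with ω hω
      simp only [Pi.zero_apply] at hω
      have h1 : (0:ℝ) < (1 + ‖g ω‖)⁻¹ := by positivity
      have h2 : ‖g ω‖ ^ 2 = 0 := by
        rcases mul_eq_zero.mp hω with h' | h'
        · exact absurd h' h1.ne'
        · exact h'
      exact norm_eq_zero.mp (sq_eq_zero_iff.mp h2)
    refine ⟨hξp, ?_⟩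
    filter_upwards [hg0, hηX, haefξ] with ω h1 h2 h3
    have h4 : fξ ω = η ω := by
      have h5 : fξ ω - η ω = 0 := h1
      exact sub_eq_zero.mp h5
    rw [h3, h4]
    exact h2
end

section
/- Every σ(L^p, L^q)-lower semicontinuous vector-valued sublinear expectation ē : L^p(ℝ^d) → ℝ^d marginalises: there exist numerical sublinear expectations e₁,…,e_d such that ē(ξ) = (e₁(ξ₁), …, e_d(ξ_d)) for all ξ = (ξ₁,…,ξ_d). -/
open MeasureTheory Set Filter
open scoped ENNReal

/-- every `σ(L^p,L^q)`-lower semicontinuous vector-valued sublinear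
expectation `ē : L^p(ℝ^d) → ℝ^d` marginalises: there are numerical sublinear expectations
`e₁, …, e_d` with `ē(ξ) = (e₁(ξ₁), …, e_d(ξ_d))`. -/
theorem vector_valued_sublinear_marginalises
    {Ω : Type*} [MeasurableSpace Ω] (μ : Measure Ω) [IsProbabilityMeasure μ]
    {d : ℕ} (p q : ℝ≥0∞) (hpq : 1/p + 1/q = 1)
    (ebar : (Ω → (Fin d → ℝ)) → (Fin d → ℝ))
    (h_const : ∀ x : Fin d → ℝ, ebar (fun _ => x) = x)
    (h_mono : ∀ ξ η : Ω → (Fin d → ℝ), MemLp ξ p μ → MemLp η p μ →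
      (∀ᵐ ω ∂μ, ∀ i, ξ ω i ≤ η ω i) → ∀ i, ebar ξ i ≤ ebar η i)
    (h_homog : ∀ (ξ : Ω → (Fin d → ℝ)), MemLp ξ p μ → ∀ c : ℝ, 0 ≤ c →
      ebar (fun ω i => c * ξ ω i) = fun i => c * ebar ξ i)
    (h_subadd : ∀ ξ η : Ω → (Fin d → ℝ), MemLp ξ p μ → MemLp η p μ →
      ∀ i, ebar (fun ω i => ξ ω i + η ω i) i ≤ ebar ξ i + ebar η i)
    (h_lsc : ∀ (ξn : ℕ → (Ω → (Fin d → ℝ))) (ξ : Ω → (Fin d → ℝ)),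
      (∀ n, MemLp (ξn n) p μ) → MemLp ξ p μ →
      (∀ ζ : Ω → (Fin d → ℝ), MemLp ζ q μ →
        Tendsto (fun n => ∫ ω, ∑ i, ξn n ω i * ζ ω i ∂μ) atTop
          (nhds (∫ ω, ∑ i, ξ ω i * ζ ω i ∂μ))) →
      ∀ i, ebar ξ i ≤ liminf (fun n => ebar (ξn n) i) atTop) :
    ∃ e : Fin d → ((Ω → ℝ) → ℝ),
      (∀ i,
        (∀ a : ℝ, e i (fun _ => a) = a) ∧
        (∀ β γ : Ω → ℝ, MemLp β p μ → MemLp γ p μ → (∀ᵐ ω ∂μ, β ω ≤ γ ω) →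
          e i β ≤ e i γ) ∧
        (∀ β : Ω → ℝ, MemLp β p μ → ∀ c : ℝ, 0 ≤ c →
          e i (fun ω => c * β ω) = c * e i β) ∧
        (∀ β γ : Ω → ℝ, MemLp β p μ → MemLp γ p μ →
          e i (fun ω => β ω + γ ω) ≤ e i β + e i γ)) ∧
      (∀ ξ : Ω → (Fin d → ℝ), MemLp ξ p μ →
        ebar ξ = fun i => e i (fun ω => ξ ω i)) := by
  classical
  -- Memℒp of coordinate projections
  have memproj : ∀ (r : ℝ≥0∞) (ξ : Ω → (Fin d → ℝ)), MemLp ξ r μ → ∀ i : Fin d,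
      MemLp (fun ω => ξ ω i) r μ := fun r ξ hξ i =>
    (LinearMap.toContinuousLinearMap
      (LinearMap.proj (R := ℝ) (φ := fun _ : Fin d => ℝ) i)).comp_memLp' hξ
  -- Memℒp of a function supported in one coordinate
  have memsingle : ∀ (i : Fin d) (β : Ω → ℝ), MemLp β p μ →
      MemLp (fun ω j => if j = i then β ω else 0) p μ := by
    intro i β hβ
    have := (LinearMap.toContinuousLinearMap
      (LinearMap.single ℝ (fun _ : Fin d => ℝ) i)).comp_memLp' hβ
    convert this using 1
    rfl
    funext ω j
    simp [Function.comp, Pi.single_apply]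
  -- KEY LEMMA: if ζ ∈ L^p and its i-th coordinate vanishes, then (ebar ζ) i ≤ 0.
  have key : ∀ (ζ : Ω → (Fin d → ℝ)), MemLp ζ p μ → ∀ i : Fin d,
      (∀ ω, ζ ω i = 0) → ebar ζ i ≤ 0 := by
    intro ζ hζ i hzero
    -- positive part
    set ζp : Ω → Fin d → ℝ := fun ω j => max (ζ ω j) 0 with hζpdef
    have hcontp : Continuous (fun x : Fin d → ℝ => fun j => max (x j) 0) :=
      continuous_pi fun j => (continuous_apply j).max continuous_const
    have hζpm : MemLp ζp p μ := by
      refine hζ.of_le (hcontp.comp_aestronglyMeasurable hζ.1) ?_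
      filter_upwards with ω
      rw [pi_norm_le_iff_of_nonneg (norm_nonneg _)]
      intro j
      calc ‖ζp ω j‖ ≤ ‖ζ ω j‖ := by
            simp only [hζpdef, Real.norm_eq_abs]
            rcases le_total (ζ ω j) 0 with h | h
            · rw [max_eq_right h]; simp
            · rw [max_eq_left h]
        _ ≤ ‖ζ ω‖ := norm_le_pi_norm _ j
    -- truncations of the positive part
    set ζn : ℕ → Ω → Fin d → ℝ := fun n ω j => min (ζp ω j) n with hζndef
    have hζnm : ∀ n, MemLp (ζn n) p μ := by
      intro n
      have hcont : Continuous (fun x : Fin d → ℝ => fun j => min (max (x j) 0) (n : ℝ)) :=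
        continuous_pi fun j => ((continuous_apply j).max continuous_const).min continuous_const
      refine hζ.of_le (hcont.comp_aestronglyMeasurable hζ.1) ?_
      filter_upwards with ω
      rw [pi_norm_le_iff_of_nonneg (norm_nonneg _)]
      intro j
      have h0 : 0 ≤ min (max (ζ ω j) 0) (n : ℝ) :=
        le_min (le_max_right _ _) (Nat.cast_nonneg n)
      calc ‖ζn n ω j‖ = min (max (ζ ω j) 0) (n : ℝ) := by
            simp only [hζndef, hζpdef, Real.norm_eq_abs]; exact abs_of_nonneg h0
        _ ≤ max (ζ ω j) 0 := min_le_left _ _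
        _ ≤ |ζ ω j| := by
            rcases le_total (ζ ω j) 0 with h | h
            · rw [max_eq_right h]; exact abs_nonneg _
            · rw [max_eq_left h]; exact le_abs_self _
        _ ≤ ‖ζ ω‖ := by rw [← Real.norm_eq_abs]; exact norm_le_pi_norm (ζ ω) j
    -- 0 ≤ ζn n ≤ ζp
    have hζn_le : ∀ n ω j, ζn n ω j ≤ ζp ω j := fun n ω j => min_le_left _ _
    have hζn_nonneg : ∀ n ω j, 0 ≤ ζn n ω j := fun n ω j =>
      le_min (le_max_right _ _) (Nat.cast_nonneg n)
    -- weak convergence ζn → ζp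
    have hweak : ∀ θ : Ω → (Fin d → ℝ), MemLp θ q μ →
        Tendsto (fun n => ∫ ω, ∑ j, ζn n ω j * θ ω j ∂μ) atTop
          (nhds (∫ ω, ∑ j, ζp ω j * θ ω j ∂μ)) := by
      intro θ hθ
      have hint : ∀ j : Fin d, Integrable (fun ω => ζp ω j * θ ω j) μ := by
        intro j
        have h1 : MemLp (fun ω => ζp ω j) p μ := memproj p ζp hζpm j
        have h2 : MemLp (fun ω => θ ω j) q μ := memproj q θ hθ j
        have h3 : MemLp ((fun ω => ζp ω j) • (fun ω => θ ω j)) 1 μ := by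
          have : ENNReal.HolderTriple p q 1 := ⟨by simpa [one_div] using hpq⟩
          exact MemLp.smul h2 h1
        rw [memLp_one_iff_integrable] at h3
        exact h3
      refine tendsto_integral_of_dominated_convergence
        (fun ω => ∑ j, |ζp ω j * θ ω j|) ?_ ?_ ?_ ?_
      · intro n
        refine Finset.aestronglyMeasurable_fun_sum _ fun j _ => ?_
        exact ((continuous_apply j).comp_aestronglyMeasurable (hζnm n).1).mul
          ((continuous_apply j).comp_aestronglyMeasurable hθ.1)
      · exact integrable_finset_sum _ fun j _ => (hint j).abs
      · intro n
        filter_upwards with ω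
        calc ‖∑ j, ζn n ω j * θ ω j‖ ≤ ∑ j, ‖ζn n ω j * θ ω j‖ := norm_sum_le _ _
          _ ≤ ∑ j, |ζp ω j * θ ω j| := by
              refine Finset.sum_le_sum fun j _ => ?_
              rw [Real.norm_eq_abs, abs_mul, abs_mul]
              refine mul_le_mul_of_nonneg_right ?_ (abs_nonneg _)
              rw [abs_of_nonneg (hζn_nonneg n ω j),
                abs_of_nonneg (le_max_right _ _)]
              exact hζn_le n ω j
      · filter_upwards with ω
        obtain ⟨N, hN⟩ := exists_nat_ge (∑ j, max (ζp ω j) 0)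
        refine tendsto_const_nhds.congr' ?_
        filter_upwards [eventually_ge_atTop N] with n hn
        refine Finset.sum_congr rfl fun j _ => ?_
        have : ζp ω j ≤ (n : ℝ) := by
          calc ζp ω j ≤ max (ζp ω j) 0 := le_max_left _ _
            _ ≤ ∑ k, max (ζp ω k) 0 :=
              Finset.single_le_sum (f := fun k => max (ζp ω k) 0)
                (fun k _ => le_max_right _ _) (Finset.mem_univ j)
            _ ≤ (N : ℝ) := hN
            _ ≤ (n : ℝ) := Nat.cast_le.2 hn
        rw [hζndef]
        simp only [min_eq_left this]
    -- lsc gives: ebar ζp i ≤ liminf ebar (ζn n) i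
    have hlsc := h_lsc ζn ζp hζnm hζpm hweak i
    -- each ebar (ζn n) i ≤ 0 by monotonicity against a constant vector
    have hbnd : ∀ n, ebar (ζn n) i ≤ 0 := by
      intro n
      have hconstm : MemLp (fun _ : Ω => fun j : Fin d => if j = i then (0:ℝ) else n) p μ :=
        memLp_const _
      have := h_mono (ζn n) (fun _ => fun j => if j = i then (0:ℝ) else n)
        (hζnm n) hconstm ?_ i
      · calc ebar (ζn n) i ≤ ebar (fun _ => fun j => if j = i then (0:ℝ) else n) i := this
          _ = 0 := by rw [h_const]; simp
      · filter_upwards with ω j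
        by_cases hj : j = i
        · subst hj
          have : ζp ω j = 0 := by simp [hζpdef, hzero ω]
          simp [hζndef, this, Nat.cast_nonneg n]
        · simp only [hζndef, if_neg hj]
          exact min_le_right _ _
    -- liminf of a sequence bounded by 0 is ≤ 0
    have hliminf : liminf (fun n => ebar (ζn n) i) atTop ≤ 0 := by
      rw [Filter.liminf_eq]
      refine Real.sSup_le ?_ le_rfl
      intro x hx
      obtain ⟨n, hn⟩ := hx.exists
      exact hn.trans (hbnd n)
    -- monotonicity: ebar ζ i ≤ ebar ζp i
    have hmono : ebar ζ i ≤ ebar ζp i := by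
      refine h_mono ζ ζp hζ hζpm ?_ i
      filter_upwards with ω j
      exact le_max_left _ _
    exact hmono.trans (hlsc.trans hliminf)
  -- the marginal expectations
  refine ⟨fun i β => ebar (fun ω j => if j = i then β ω else 0) i, fun i => ⟨?_, ?_, ?_, ?_⟩, ?_⟩
  · -- constants
    intro a
    show ebar (fun _ : Ω => fun j : Fin d => if j = i then a else 0) i = a
    simpa using congrFun (h_const (fun j : Fin d => if j = i then a else 0)) i
  · -- monotone
    intro β γ hβ hγ hle
    refine h_mono _ _ (memsingle i β hβ) (memsingle i γ hγ) ?_ i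
    filter_upwards [hle] with ω hω j
    by_cases hj : j = i <;> simp [hj, hω]
  · -- positive homogeneity
    intro β hβ c hc
    have h1 : (fun ω (j : Fin d) => if j = i then c * β ω else 0)
        = fun ω j => c * (if j = i then β ω else 0) := by
      funext ω j
      by_cases hj : j = i <;> simp [hj]
    show ebar (fun ω (j : Fin d) => if j = i then c * β ω else 0) i
      = c * ebar (fun ω j => if j = i then β ω else 0) i
    rw [h1, h_homog _ (memsingle i β hβ) c hc]
  · -- subadditivity
    intro β γ hβ hγ
    have h1 : (fun ω (j : Fin d) => if j = i then β ω + γ ω else 0)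
        = fun ω j => (if j = i then β ω else 0) + (if j = i then γ ω else 0) := by
      funext ω j
      by_cases hj : j = i <;> simp [hj]
    show ebar (fun ω (j : Fin d) => if j = i then β ω + γ ω else 0) i
      ≤ ebar (fun ω j => if j = i then β ω else 0) i
        + ebar (fun ω j => if j = i then γ ω else 0) i
    rw [h1]
    exact h_subadd _ _ (memsingle i β hβ) (memsingle i γ hγ) i
  · -- marginalisation
    intro ξ hξ
    funext i
    set η : Ω → Fin d → ℝ := fun ω j => if j = i then ξ ω i else 0 with hηdef
    have hηm : MemLp η p μ := memsingle i _ (memproj p ξ hξ i)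
    have hζ1m : MemLp (fun ω j => ξ ω j - η ω j) p μ := by
      have := hξ.sub hηm
      convert this using 1
      rfl
      rfl
    have hζ2m : MemLp (fun ω j => η ω j - ξ ω j) p μ := by
      have := hηm.sub hξ
      convert this using 1
      rfl
      rfl
    have h1 : ebar ξ i ≤ ebar η i := by
      have hs := h_subadd η (fun ω j => ξ ω j - η ω j) hηm hζ1m i
      have he : (fun ω (j : Fin d) => η ω j + (ξ ω j - η ω j)) = ξ := by
        funext ω j; ring
      rw [he] at hs
      have hk : ebar (fun ω j => ξ ω j - η ω j) i ≤ 0 := by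
        refine key _ hζ1m i fun ω => ?_
        simp [hηdef]
      linarith
    have h2 : ebar η i ≤ ebar ξ i := by
      have hs := h_subadd ξ (fun ω j => η ω j - ξ ω j) hξ hζ2m i
      have he : (fun ω (j : Fin d) => ξ ω j + (η ω j - ξ ω j)) = η := by
        funext ω j; ring
      rw [he] at hs
      have hk : ebar (fun ω j => η ω j - ξ ω j) i ≤ 0 := by
        refine key _ hζ2m i fun ω => ?_
        simp [hηdef]
      linarith
    exact le_antisymm h1 h2
end
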